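/- If G is a graph of order n with minimum degree δ(G) = 0 and n ≥ 2, then SEC(G) = n if and only if G ≅ K₁ ∪ K_{n−1} (an isolated vertex together with a complete graph on n−1 vertices). -/

import Mathlib

namespace SecCoal

/-- `D` is a dominating set of `G`. -/
def IsDominating {V : Type*} (G : SimpleGraph V) (D : Set V) : Prop :=
  ∀ v ∉ D, ∃ u ∈ D, G.Adj u v

/-- `S` is a secure dominating set of `G`. -/
def IsSecureDominating {V : Type*} (G : SimpleGraph V) (S : Set V) : Prop :=
  IsDominating G S ∧
    ∀ u ∉ S, ∃ v ∈ S, G.Adj v u ∧ IsDominating G ((S \ {v}) ∪ {u})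

/-- Degree of a vertex. -/
noncomputable def deg {V : Type*} (G : SimpleGraph V) (v : V) : ℕ :=
  (G.neighborSet v).ncard

/-- Minimum degree. -/
noncomputable def minDeg {V : Type*} (G : SimpleGraph V) : ℕ :=
  sInf (Set.range (deg G))

/-- Maximum degree. -/
noncomputable def maxDeg {V : Type*} (G : SimpleGraph V) : ℕ :=
  sSup (Set.range (deg G))

/-- `π` is a secure coalition partition of `G`. -/
def IsSecPartition {V : Type*} (G : SimpleGraph V) (π : Finset (Set V)) : Prop :=
  Setoid.IsPartition (↑π : Set (Set V)) ∧
    ∀ A ∈ π,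
      (∃ v, A = {v} ∧ deg G v = Nat.card V - 1 ∧ IsSecureDominating G A) ∨
      (¬ IsSecureDominating G A ∧
        ∃ B ∈ π, B ≠ A ∧ IsSecureDominating G (A ∪ B))

/-- The secure coalition number of `G`. -/
noncomputable def SEC {V : Type*} (G : SimpleGraph V) : ℕ :=
  sSup {k | ∃ π : Finset (Set V), IsSecPartition G π ∧ π.card = k}

/-- Two disjoint sets form a secure coalition. -/
def FormsSecCoalition {V : Type*} (G : SimpleGraph V) (A B : Set V) : Prop :=
  Disjoint A B ∧ ¬ IsSecureDominating G A ∧ ¬ IsSecureDominating G B ∧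
    IsSecureDominating G (A ∪ B)

/-- The domination number of `G`. -/
noncomputable def gammaDom {V : Type*} (G : SimpleGraph V) : ℕ :=
  sInf {k | ∃ D : Set V, IsDominating G D ∧ D.ncard = k}

/-- The secure domination number of `G`. -/
noncomputable def secDomNum {V : Type*} (G : SimpleGraph V) : ℕ :=
  sInf {k | ∃ S : Set V, IsSecureDominating G S ∧ S.ncard = k}

/-- `π` is a coalition partition (w.r.t. domination) of `G`. -/
def IsCoalitionPartition {V : Type*} (G : SimpleGraph V) (π : Finset (Set V)) : Prop :=
  Setoid.IsPartition (↑π : Set (Set V)) ∧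
    ∀ A ∈ π,
      (∃ v, A = {v} ∧ IsDominating G A) ∨
      (¬ IsDominating G A ∧ ∃ B ∈ π, B ≠ A ∧ IsDominating G (A ∪ B))

/-- The coalition number of `G`. -/
noncomputable def CNum {V : Type*} (G : SimpleGraph V) : ℕ :=
  sSup {k | ∃ π : Finset (Set V), IsCoalitionPartition G π ∧ π.card = k}

/-- The secure coalition graph of `G` w.r.t. a partition `π`. -/
def SCG {V : Type*} (G : SimpleGraph V) (π : Finset (Set V)) :
    SimpleGraph {A : Set V // A ∈ π} where
  Adj A B := FormsSecCoalition G A.1 B.1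
  symm := by
    constructor
    rintro A B ⟨hd, h1, h2, h3⟩
    exact ⟨hd.symm, h2, h1, by rwa [Set.union_comm]⟩
  loopless := by
    constructor
    rintro A ⟨hd, h1, h2, h3⟩
    exact h1 (by simpa using h3)

end SecCoal

open SecCoal

section Aux

variable {V : Type*}

/-- The key adjacency characterization: `G` is `K₁ ∪ K_{n-1}` with isolated vertex `w`. -/
def CharGraph (G : SimpleGraph V) (w : V) : Prop :=
  ∀ a b : V, G.Adj a b ↔ a ≠ b ∧ a ≠ w ∧ b ≠ w

open scoped Classical in
/-- a choice function for nonempty sets -/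
noncomputable def pick [Nonempty V] (A : Set V) : V :=
  if h : A.Nonempty then h.some else Classical.arbitrary V

lemma pick_mem [Nonempty V] {A : Set V} (h : A.Nonempty) : pick A ∈ A := by
  classical
  rw [pick]
  split
  · next h' => exact h'.some_mem
  · next h' => exact absurd h h'

lemma partition_unique {π : Finset (Set V)}
    (h : Setoid.IsPartition (↑π : Set (Set V))) {A B : Set V} {x : V}
    (hA : A ∈ π) (hB : B ∈ π) (hxA : x ∈ A) (hxB : x ∈ B) : A = B := by
  obtain ⟨b, _, hb⟩ := h.2 x
  rw [hb A ⟨hA, hxA⟩, hb B ⟨hB, hxB⟩]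

lemma partition_nonempty {π : Finset (Set V)}
    (h : Setoid.IsPartition (↑π : Set (Set V))) {A : Set V} (hA : A ∈ π) :
    A.Nonempty := by
  rcases Set.eq_empty_or_nonempty A with rfl | h'
  · exact absurd hA h.1
  · exact h'

lemma partition_card_le [Fintype V] [Nonempty V] {π : Finset (Set V)}
    (h : Setoid.IsPartition (↑π : Set (Set V))) : π.card ≤ Fintype.card V := by
  rw [← Finset.card_univ]
  apply Finset.card_le_card_of_injOn pick (fun _ _ => Finset.mem_univ _)
  intro A hA B hB hpick
  exact partition_unique h hA hB (pick_mem (partition_nonempty h hA))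
    (hpick ▸ pick_mem (partition_nonempty h hB))

lemma partition_singletons [Fintype V] [Nonempty V] {π : Finset (Set V)}
    (h : Setoid.IsPartition (↑π : Set (Set V))) (hcard : π.card = Fintype.card V) :
    ∀ A ∈ π, ∃ v, A = {v} := by
  classical
  have himg : π.image pick = Finset.univ := by
    apply Finset.eq_of_subset_of_card_le (fun _ _ => Finset.mem_univ _)
    rw [Finset.card_univ, ← hcard]
    apply le_of_eq
    refine (Finset.card_image_of_injOn ?_).symm
    intro A hA B hB hpick
    exact partition_unique h hA hB (pick_mem (partition_nonempty h hA))
      (hpick ▸ pick_mem (partition_nonempty h hB))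
  intro A hA
  refine ⟨pick A, Set.eq_singleton_iff_nonempty_unique_mem.2
    ⟨partition_nonempty h hA, ?_⟩⟩
  intro x hx
  have : x ∈ π.image pick := himg ▸ Finset.mem_univ x
  obtain ⟨B, hB, hBx⟩ := Finset.mem_image.1 this
  have := partition_unique h hA hB hx (hBx ▸ pick_mem (partition_nonempty h hB))
  rw [this, hBx]

lemma pair_secure {G : SimpleGraph V} {w : V} (hG : CharGraph G w) {u : V}
    (hu : u ≠ w) : IsSecureDominating G ({u} ∪ {w}) := by
  have hwu : w ≠ u := hu.symm
  constructor
  · intro x hx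
    simp only [Set.mem_union, Set.mem_singleton_iff, not_or] at hx
    exact ⟨u, Or.inl rfl, (hG u x).2 ⟨fun h => hx.1 h.symm, hu, hx.2⟩⟩
  · intro x hx
    simp only [Set.mem_union, Set.mem_singleton_iff, not_or] at hx
    refine ⟨u, Or.inl rfl, (hG u x).2 ⟨fun h => hx.1 h.symm, hu, hx.2⟩, ?_⟩
    intro y hy
    have hyx : y ≠ x := by
      rintro rfl
      exact hy (Set.mem_union_right _ rfl)
    have hyw : y ≠ w := by
      rintro rfl
      refine hy (Set.mem_union_left _ ⟨Set.mem_union_right _ rfl, ?_⟩)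
      simpa using hwu
    exact ⟨x, Set.mem_union_right _ rfl, (hG x y).2 ⟨hyx.symm, hx.2, hyw⟩⟩

lemma sec_eq_of_char [Fintype V] {G : SimpleGraph V} (hn : 2 ≤ Fintype.card V)
    {w : V} (hG : CharGraph G w) : SEC G = Fintype.card V := by
  classical
  have hne : Nonempty V := Fintype.card_pos_iff.1 (by omega)
  have hw : ∀ u, ¬ G.Adj u w := fun u h => ((hG u w).1 h).2.2 rfl
  have hnotsec : ∀ v : V, ¬ IsSecureDominating G {v} := by
    intro v hsec
    rcases eq_or_ne v w with hvw | hvw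
    · obtain ⟨u, hu⟩ := Fintype.exists_ne_of_one_lt_card (by omega) v
      obtain ⟨z, hz, hadj⟩ := hsec.1 u (by simpa using hu)
      rw [Set.mem_singleton_iff] at hz
      rw [hz, hvw] at hadj
      exact hw u hadj.symm
    · obtain ⟨z, hz, hadj⟩ := hsec.1 w (by simpa using hvw.symm)
      rw [Set.mem_singleton_iff] at hz
      rw [hz] at hadj
      exact hw v hadj
  set π : Finset (Set V) := Finset.univ.image (fun v => ({v} : Set V)) with hπ
  have hmem : ∀ v : V, ({v} : Set V) ∈ π := fun v =>
    Finset.mem_image.2 ⟨v, Finset.mem_univ v, rfl⟩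
  have hcard : π.card = Fintype.card V := by
    rw [hπ, Finset.card_image_of_injective _ Set.singleton_injective, Finset.card_univ]
  have hpart : Setoid.IsPartition (↑π : Set (Set V)) := by
    constructor
    · intro h
      obtain ⟨v, _, hv⟩ := Finset.mem_image.1 (Finset.mem_coe.1 h)
      exact Set.singleton_ne_empty v hv
    · intro a
      refine ⟨{a}, ⟨hmem a, rfl⟩, ?_⟩
      rintro B ⟨hB, haB⟩
      obtain ⟨v, _, rfl⟩ := Finset.mem_image.1 (Finset.mem_coe.1 hB)
      rw [Set.mem_singleton_iff] at haB; subst haB; rfl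
  have hsecpart : IsSecPartition G π := by
    refine ⟨hpart, ?_⟩
    intro A hA
    obtain ⟨v, _, rfl⟩ := Finset.mem_image.1 hA
    right
    refine ⟨hnotsec v, ?_⟩
    rcases eq_or_ne v w with hvw | hvw
    · obtain ⟨u, hu⟩ := Fintype.exists_ne_of_one_lt_card (by omega) v
      refine ⟨{u}, hmem u, fun h => hu (Set.singleton_eq_singleton_iff.1 h), ?_⟩
      rw [Set.union_comm, hvw]
      exact pair_secure hG (hvw ▸ hu)
    · exact ⟨{w}, hmem w, fun h => hvw (Set.singleton_eq_singleton_iff.1 h).symm,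
        pair_secure hG hvw⟩
  have hub : ∀ k ∈ {k | ∃ π : Finset (Set V), IsSecPartition G π ∧ π.card = k},
      k ≤ Fintype.card V := by
    rintro k ⟨π', hπ', rfl⟩
    exact partition_card_le hπ'.1
  have hn_mem : Fintype.card V ∈
      {k | ∃ π : Finset (Set V), IsSecPartition G π ∧ π.card = k} :=
    ⟨π, hsecpart, hcard⟩
  exact le_antisymm (csSup_le ⟨_, hn_mem⟩ hub) (le_csSup ⟨_, hub⟩ hn_mem)

lemma char_of_sec [Fintype V] {G : SimpleGraph V} (hn : 2 ≤ Fintype.card V)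
    {w : V} (hw : ∀ u, ¬ G.Adj u w) (hsec : SEC G = Fintype.card V) :
    CharGraph G w := by
  classical
  have hne : Nonempty V := Fintype.card_pos_iff.1 (by omega)
  unfold SEC at hsec
  set K := {k | ∃ π : Finset (Set V), IsSecPartition G π ∧ π.card = k} with hK
  have hub : ∀ k ∈ K, k ≤ Fintype.card V := by
    rintro k ⟨π', hπ', rfl⟩
    exact partition_card_le hπ'.1
  have hKne : K.Nonempty := by
    by_contra h
    rw [Set.not_nonempty_iff_eq_empty] at h
    rw [h, csSup_empty] at hsec
    simp at hsec; omega
  have hmem : Fintype.card V ∈ K := hsec ▸ Nat.sSup_mem hKne ⟨_, hub⟩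
  obtain ⟨π, hπ, hcard⟩ := hmem
  have hsing := partition_singletons hπ.1 hcard
  have hmemsing : ∀ v : V, ({v} : Set V) ∈ π := by
    intro v
    obtain ⟨A, ⟨hA, hvA⟩, -⟩ := hπ.1.2 v
    obtain ⟨u, rfl⟩ := hsing A hA
    rw [Set.mem_singleton_iff] at hvA; subst hvA
    exact hA
  have hdegw : deg G w = 0 := by
    rw [deg, Set.ncard_eq_zero]
    ext u; simp only [SimpleGraph.mem_neighborSet, Set.mem_empty_iff_false, iff_false]
    exact fun h => hw u h.symm
  rcases hπ.2 {w} (hmemsing w) with ⟨v, hv, hdeg, -⟩ | ⟨-, B, hB, hBne, hBsec⟩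
  · exfalso
    have hvw : v = w := (Set.singleton_eq_singleton_iff.1 hv.symm)
    rw [hvw, hdegw] at hdeg
    rw [Nat.card_eq_fintype_card] at hdeg
    omega
  obtain ⟨u, rfl⟩ := hsing B hB
  have huw : u ≠ w := fun h => hBne (by rw [h])
  have hdom : ∀ x, x ≠ w → x ≠ u → G.Adj u x := by
    intro x hxw hxu
    obtain ⟨z, hz, hadj⟩ := hBsec.1 x (by simp [hxw, hxu])
    simp only [Set.mem_union, Set.mem_singleton_iff] at hz
    rcases hz with rfl | rfl
    · exact absurd hadj.symm (hw x)
    · exact hadj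
  have hstrong : ∀ x, x ≠ w → x ≠ u → ∀ y, y ≠ w → y ≠ x → G.Adj x y := by
    intro x hxw hxu
    obtain ⟨z, hz, hadj, hdomin⟩ := hBsec.2 x (by simp [hxw, hxu])
    simp only [Set.mem_union, Set.mem_singleton_iff] at hz
    have hzu : z = u := by
      rcases hz with rfl | rfl
      · exact absurd hadj.symm (hw x)
      · rfl
    subst hzu
    intro y hyw hyx
    obtain ⟨z', hz', hadj'⟩ := hdomin y (by
      intro hy
      simp only [Set.mem_union, Set.mem_diff, Set.mem_singleton_iff] at hy
      rcases hy with ⟨rfl | rfl, hy2⟩ | rfl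
      · exact hyw rfl
      · exact hy2 rfl
      · exact hyx rfl)
    simp only [Set.mem_union, Set.mem_diff, Set.mem_singleton_iff] at hz'
    rcases hz' with ⟨rfl | rfl, hz2⟩ | rfl
    · exact absurd hadj'.symm (hw y)
    · exact absurd rfl hz2
    · exact hadj'
  intro a b
  constructor
  · intro h
    refine ⟨G.ne_of_adj h, ?_, ?_⟩
    · rintro rfl; exact hw b h.symm
    · rintro rfl; exact hw a h
  · rintro ⟨hab, haw, hbw⟩
    rcases eq_or_ne a u with rfl | hau
    · exact hdom b hbw (Ne.symm hab)
    · exact hstrong a haw hau b hbw (Ne.symm hab)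

lemma iso_of_char [Fintype V] {G : SimpleGraph V} (hn : 2 ≤ Fintype.card V)
    {w : V} (hG : CharGraph G w) :
    Nonempty (G ≃g ((⊤ : SimpleGraph (Fin 1)) ⊕g
      (⊤ : SimpleGraph (Fin (Fintype.card V - 1))))) := by
  classical
  have e1 : {x : V // x = w} ≃ Fin 1 :=
    Fintype.equivFinOfCardEq (Fintype.card_subtype_eq w)
  have e2 : {x : V // ¬ x = w} ≃ Fin (Fintype.card V - 1) := by
    apply Fintype.equivFinOfCardEq
    rw [Fintype.card_subtype_compl, Fintype.card_subtype_eq]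
  refine ⟨⟨(Equiv.sumCompl (· = w)).symm.trans (Equiv.sumCongr e1 e2), ?_⟩⟩
  intro a b
  show ((⊤ : SimpleGraph (Fin 1)) ⊕g _).Adj
    ((Equiv.sumCongr e1 e2) ((Equiv.sumCompl (· = w)).symm a))
    ((Equiv.sumCongr e1 e2) ((Equiv.sumCompl (· = w)).symm b)) ↔ G.Adj a b
  by_cases ha : a = w <;> by_cases hb : b = w
  · rw [show (Equiv.sumCompl (· = w)).symm a = Sum.inl ⟨a, ha⟩ from Equiv.sumCompl_symm_apply_of_pos (p := fun x => x = w) ha,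
        show (Equiv.sumCompl (· = w)).symm b = Sum.inl ⟨b, hb⟩ from Equiv.sumCompl_symm_apply_of_pos (p := fun x => x = w) hb]
    simp only [Equiv.sumCongr_apply, Sum.map_inl]
    apply iff_of_false
    · simp [Subsingleton.elim (e1 ⟨a, ha⟩) (e1 ⟨b, hb⟩)]
    · intro h; exact ((hG a b).1 h).2.1 ha
  · rw [show (Equiv.sumCompl (· = w)).symm a = Sum.inl ⟨a, ha⟩ from Equiv.sumCompl_symm_apply_of_pos (p := fun x => x = w) ha,
        show (Equiv.sumCompl (· = w)).symm b = Sum.inr ⟨b, hb⟩ from Equiv.sumCompl_symm_apply_of_neg (p := fun x => x = w) hb]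
    simp only [Equiv.sumCongr_apply, Sum.map_inl, Sum.map_inr]
    apply iff_of_false
    · simp
    · intro h; exact ((hG a b).1 h).2.1 ha
  · rw [show (Equiv.sumCompl (· = w)).symm a = Sum.inr ⟨a, ha⟩ from Equiv.sumCompl_symm_apply_of_neg (p := fun x => x = w) ha,
        show (Equiv.sumCompl (· = w)).symm b = Sum.inl ⟨b, hb⟩ from Equiv.sumCompl_symm_apply_of_pos (p := fun x => x = w) hb]
    simp only [Equiv.sumCongr_apply, Sum.map_inl, Sum.map_inr]
    apply iff_of_false
    · simp
    · intro h; exact ((hG a b).1 h).2.2 hb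
  · rw [show (Equiv.sumCompl (· = w)).symm a = Sum.inr ⟨a, ha⟩ from Equiv.sumCompl_symm_apply_of_neg (p := fun x => x = w) ha,
        show (Equiv.sumCompl (· = w)).symm b = Sum.inr ⟨b, hb⟩ from Equiv.sumCompl_symm_apply_of_neg (p := fun x => x = w) hb]
    simp only [Equiv.sumCongr_apply, Sum.map_inr]
    rw [hG a b]
    simp only [SimpleGraph.sum_adj, SimpleGraph.top_adj]
    constructor
    · intro h
      refine ⟨?_, ha, hb⟩
      rintro rfl
      exact h rfl
    · rintro ⟨hab, -, -⟩ h
      exact hab (Subtype.ext_iff.1 (e2.injective h))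

lemma char_of_iso [Fintype V] {G : SimpleGraph V}
    (φ : G ≃g ((⊤ : SimpleGraph (Fin 1)) ⊕g
      (⊤ : SimpleGraph (Fin (Fintype.card V - 1))))) :
    CharGraph G (φ.symm (Sum.inl 0)) := by
  set w := φ.symm (Sum.inl 0) with hwdef
  have hφw : φ w = Sum.inl 0 := by
    rw [hwdef]
    exact φ.toEquiv.apply_symm_apply _
  have key : ∀ x : V, x ≠ w → ∃ i, φ x = Sum.inr i := by
    intro x hx
    rcases h : φ x with i | i
    · exfalso
      apply hx
      apply φ.injective
      rw [h, hφw, Subsingleton.elim i 0]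
    · exact ⟨i, rfl⟩
  intro a b
  rw [← φ.map_adj_iff]
  constructor
  · intro h
    have hab : a ≠ b := by
      rintro rfl
      exact ((⊤ : SimpleGraph (Fin 1)) ⊕g _).loopless.irrefl _ h
    have haw : a ≠ w := by
      rintro rfl
      rw [hφw] at h
      rcases hb : φ b with j | j <;> rw [hb] at h
      · simp [Subsingleton.elim (0 : Fin 1) j] at h
      · simp at h
    have hbw : b ≠ w := by
      rintro rfl
      rw [hφw] at h
      rcases hb : φ a with j | j <;> rw [hb] at h
      · simp [Subsingleton.elim (0 : Fin 1) j] at h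
      · simp at h
    exact ⟨hab, haw, hbw⟩
  · rintro ⟨hab, ha, hb⟩
    obtain ⟨i, hi⟩ := key a ha
    obtain ⟨j, hj⟩ := key b hb
    rw [hi, hj]
    simp only [SimpleGraph.sum_adj, SimpleGraph.top_adj]
    intro hij
    apply hab
    apply φ.injective
    rw [hi, hj, hij]

end Aux

theorem stmt11 {V : Type*} [Fintype V] (G : SimpleGraph V)
    (hn : 2 ≤ Fintype.card V) (hδ : ∃ v : V, ∀ u, ¬ G.Adj u v) :
    SEC G = Fintype.card V ↔
      Nonempty (G ≃g ((⊤ : SimpleGraph (Fin 1)) ⊕g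
        (⊤ : SimpleGraph (Fin (Fintype.card V - 1))))) := by
  constructor
  · intro h
    obtain ⟨w, hw⟩ := hδ
    exact iso_of_char hn (char_of_sec hn hw h)
  · rintro ⟨φ⟩
    exact sec_eq_of_char hn (char_of_iso φ)
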